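/- For d ≥ 4, one can add exactly 2^{d-1} - d edges to the graph of the (d-1)-cube so that the resulting bipartite graph G = (A ⊎ B, E) is (1,d)-Laman: |E| = d|A| + |B| - d, and every induced subgraph with A' ≠ ∅ and B' ≠ ∅ has at most d|A'| + |B'| - d edges. -/

import Mathlib

/-- A vertex of the cube `{0,1}^n` has even coordinate sum. -/
def evenVertex {n : ℕ} (v : Fin n → Bool) : Prop :=
  (Finset.univ.filter fun i => v i).card % 2 = 0

instance {n : ℕ} (v : Fin n → Bool) : Decidable (evenVertex v) :=
  inferInstanceAs (Decidable (_ = 0))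

/-- The edges of the cube graph on `{0,1}^n`, directed from the even side `A` to
the odd side `B`. -/
def cubeEdges (n : ℕ) : Finset ((Fin n → Bool) × (Fin n → Bool)) :=
  Finset.univ.filter fun p =>
    evenVertex p.1 ∧ ¬ evenVertex p.2 ∧
      (Finset.univ.filter fun i => p.1 i ≠ p.2 i).card = 1

set_option linter.unusedVariables false

namespace CubeLaman

open Finset

variable {n : ℕ}

abbrev V (n : ℕ) := Fin n → Bool



def xAdd (v w : V n) : V n := fun i => xor (v i) (w i)

@[simp] lemma xAdd_apply (v w : V n) (i : Fin n) : xAdd v w i = xor (v i) (w i) := rfl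

lemma xAdd_cancel_left (v w : V n) : xAdd v (xAdd v w) = w := by
  funext i; simp [xAdd]

lemma xAdd_comm (v w : V n) : xAdd v w = xAdd w v := by
  funext i; simp [xAdd, Bool.xor_comm]

lemma xAdd_right_self (v w : V n) : xAdd (xAdd w v) v = w := by
  funext i; simp [xAdd, Bool.xor_assoc]

lemma xAdd_left_injective (v : V n) : Function.Injective (xAdd v) := by
  intro a b h
  have := congrArg (xAdd v) h
  rwa [xAdd_cancel_left, xAdd_cancel_left] at this

/-- weight -/
def wt (v : V n) : ℕ := (Finset.univ.filter fun i => v i).card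

lemma evenVertex_iff_wt (v : V n) : evenVertex v ↔ wt v % 2 = 0 := Iff.rfl

/-- odd-parity indicator -/
def par (v : V n) : Bool := decide (¬ evenVertex v)

lemma par_eq_false_iff (v : V n) : par v = false ↔ evenVertex v := by
  simp [par]

lemma par_eq_true_iff (v : V n) : par v = true ↔ ¬ evenVertex v := by
  simp [par]

lemma wt_xAdd (v w : V n) : wt (xAdd v w) +
    2 * ((Finset.univ.filter fun i => v i) ∩ (Finset.univ.filter fun i => w i)).card
    = wt v + wt w := by
  classical
  have h1 : (Finset.univ.filter fun i => (xAdd v w i : Prop)) =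
      ((Finset.univ.filter fun i => v i) ∪ (Finset.univ.filter fun i => w i)) \
        ((Finset.univ.filter fun i => v i) ∩ (Finset.univ.filter fun i => w i)) := by
    ext i
    simp only [mem_filter, mem_univ, true_and, mem_sdiff, mem_union, mem_inter, xAdd_apply]
    cases hv : v i <;> cases hw : w i <;> simp [hv, hw]
  have hsub : ((Finset.univ.filter fun i => v i) ∩ (Finset.univ.filter fun i => w i)) ⊆
      ((Finset.univ.filter fun i => v i) ∪ (Finset.univ.filter fun i => w i)) :=
    (inter_subset_left).trans subset_union_left
  have h2 := Finset.card_sdiff_of_subset hsub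
  have h3 := Finset.card_union_add_card_inter (Finset.univ.filter fun i => v i)
      (Finset.univ.filter fun i => w i)
  have h4 : ((Finset.univ.filter fun i => v i) ∩ (Finset.univ.filter fun i => w i)).card ≤
      ((Finset.univ.filter fun i => v i) ∪ (Finset.univ.filter fun i => w i)).card :=
    Finset.card_le_card hsub
  unfold wt
  rw [h1, h2]
  omega

lemma even_xAdd_iff (v w : V n) :
    evenVertex (xAdd v w) ↔ (evenVertex v ↔ evenVertex w) := by
  have h := wt_xAdd v w
  rw [evenVertex_iff_wt, evenVertex_iff_wt, evenVertex_iff_wt]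
  omega

lemma par_xAdd (v w : V n) : par (xAdd v w) = xor (par v) (par w) := by
  have h := even_xAdd_iff v w
  by_cases hv : evenVertex v <;> by_cases hw : evenVertex w <;>
    simp [par, h, hv, hw]


/-- standard basis vector -/
def bv (i : Fin n) : V n := fun j => decide (j = i)

lemma bv_filter (i : Fin n) : (Finset.univ.filter fun j => (bv i j : Prop)) = {i} := by
  ext j; simp [bv]

lemma wt_bv (i : Fin n) : wt (bv i) = 1 := by
  unfold wt; rw [bv_filter]; simp

lemma not_even_bv (i : Fin n) : ¬ evenVertex (bv i) := by
  intro h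
  rw [show evenVertex (bv i) ↔ wt (bv i) % 2 = 0 from Iff.rfl, wt_bv] at h
  omega

lemma bv_injective : Function.Injective (bv (n := n)) := by
  intro i j h
  have := congrFun h i
  simp [bv] at this
  exact this

lemma xAdd_bv_of_ne (v : V n) (j i : Fin n) (h : i ≠ j) : xAdd v (bv j) i = v i := by
  simp [bv, h]

lemma xAdd_bv_self (v : V n) (j : Fin n) : xAdd v (bv j) j = !(v j) := by
  simp [bv]

/-- characterization of cube edges -/
lemma mem_cubeEdges_iff (p : V n × V n) :
    p ∈ cubeEdges n ↔ evenVertex p.1 ∧ ∃ j, p.2 = xAdd p.1 (bv j) := by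
  constructor
  · intro hp
    rw [cubeEdges, mem_filter] at hp
    obtain ⟨-, h1, h2, h3⟩ := hp
    refine ⟨h1, ?_⟩
    obtain ⟨j, hj⟩ := Finset.card_eq_one.1 h3
    refine ⟨j, ?_⟩
    funext i
    by_cases hij : i = j
    · subst hij
      have : i ∈ Finset.univ.filter fun i => p.1 i ≠ p.2 i := by rw [hj]; simp
      rw [mem_filter] at this
      have hne := this.2
      rw [xAdd_bv_self]
      cases h1 : p.1 i <;> cases h2 : p.2 i <;> simp_all
    · have : i ∉ Finset.univ.filter fun i => p.1 i ≠ p.2 i := by rw [hj]; simpa using hij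
      rw [mem_filter] at this
      push_neg at this
      have := this (mem_univ i)
      rw [xAdd_bv_of_ne _ _ _ hij]
      exact this.symm
  · rintro ⟨h1, j, hj⟩
    rw [cubeEdges, mem_filter]
    refine ⟨mem_univ _, h1, ?_, ?_⟩
    · rw [hj, even_xAdd_iff]
      intro h
      exact not_even_bv j (h.1 h1)
    · rw [hj]
      have : (Finset.univ.filter fun i => p.1 i ≠ xAdd p.1 (bv j) i) = {j} := by
        ext i
        simp only [mem_filter, mem_univ, true_and, mem_singleton]
        by_cases hij : i = j
        · subst hij
          rw [xAdd_bv_self]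
          simp
        · rw [xAdd_bv_of_ne _ _ _ hij]
          simp [hij]
      rw [this]; simp

/-- support contained in J -/
def suppIn (v : V n) (J : Finset (Fin n)) : Prop := ∀ i, v i = true → i ∈ J

instance (v : V n) (J : Finset (Fin n)) : Decidable (suppIn v J) :=
  inferInstanceAs (Decidable (∀ _, _))

def bucket (J : Finset (Fin n)) (b : Bool) : Finset (V n) :=
  Finset.univ.filter fun v => suppIn v J ∧ par v = b

lemma mem_bucket {J : Finset (Fin n)} {b : Bool} {v : V n} :
    v ∈ bucket J b ↔ suppIn v J ∧ par v = b := by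
  simp [bucket]

lemma card_suppIn (J : Finset (Fin n)) :
    (Finset.univ.filter fun v : V n => suppIn v J).card = 2 ^ J.card := by
  classical
  rw [← Finset.card_powerset]
  apply Finset.card_bij (fun v _ => J.filter fun i => v i)
  · intro v hv
    simp [Finset.mem_powerset, Finset.filter_subset]
  · intro v hv w hw h
    rw [mem_filter] at hv hw
    funext i
    by_cases hiJ : i ∈ J
    · have : (i ∈ J.filter fun i => v i) ↔ (i ∈ J.filter fun i => w i) := by rw [h]
      simp only [mem_filter, hiJ, true_and] at this
      cases h1 : v i <;> cases h2 : w i <;> simp_all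
    · have h1 : v i = false := by
        cases h1 : v i
        · rfl
        · exact absurd (hv.2 i h1) hiJ
      have h2 : w i = false := by
        cases h2 : w i
        · rfl
        · exact absurd (hw.2 i h2) hiJ
      rw [h1, h2]
  · intro s hs
    rw [Finset.mem_powerset] at hs
    refine ⟨fun i => decide (i ∈ s), by rw [mem_filter]; exact ⟨mem_univ _, fun i hi => hs (by simpa using hi)⟩, ?_⟩
    ext i
    simp only [mem_filter, decide_eq_true_eq]
    exact ⟨fun h => h.2, fun h => ⟨hs h, h⟩⟩

lemma bucket_card {J : Finset (Fin n)} (hJ : J.Nonempty) (b : Bool) :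
    (bucket J b).card = 2 ^ (J.card - 1) := by
  classical
  obtain ⟨j0, hj0⟩ := hJ
  -- bijection between the two buckets
  have hflip : ∀ b : Bool, (bucket J b).card = (bucket J (!b)).card := by
    intro b
    apply Finset.card_bij (fun v _ => xAdd v (bv j0))
    · intro v hv
      rw [mem_bucket] at hv ⊢
      constructor
      · intro i hi
        simp only [xAdd_apply] at hi
        by_cases hij : i = j0
        · subst hij; exact hj0
        · apply hv.1 i
          simpa [bv, hij] using hi
      · have : par (xAdd v (bv j0)) = !(par v) := by
          have h := even_xAdd_iff v (bv j0)
          by_cases hv' : evenVertex v <;> simp [par, h, hv', not_even_bv j0]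
        rw [this, hv.2]
    · intro v hv w hw h
      have h2 := congrArg (fun u => xAdd u (bv j0)) h
      rwa [xAdd_right_self, xAdd_right_self] at h2
    · intro w hw
      refine ⟨xAdd w (bv j0), ?_, ?_⟩
      · rw [mem_bucket] at hw ⊢
        constructor
        · intro i hi
          simp only [xAdd_apply] at hi
          by_cases hij : i = j0
          · subst hij; exact hj0
          · apply hw.1 i; simpa [bv, hij] using hi
        · have : par (xAdd w (bv j0)) = !(par w) := by
            have h := even_xAdd_iff w (bv j0)
            by_cases hw' : evenVertex w <;> simp [par, h, hw', not_even_bv j0]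
          rw [this, hw.2]; simp
      · exact xAdd_right_self (bv j0) w
  have hsplit : (bucket J false).card + (bucket J true).card = 2 ^ J.card := by
    classical
    have h0 : ∀ b : Bool, bucket J b =
        (Finset.univ.filter fun v : V n => suppIn v J).filter fun v => par v = b := by
      intro b
      rw [Finset.filter_filter]
      rfl
    rw [h0, h0, ← card_suppIn J]
    have h1 := Finset.card_filter_add_card_filter_not
      (s := Finset.univ.filter fun v : V n => suppIn v J)
      (p := fun v => par v = false)
    rw [← h1]
    congr 1
    exact congrArg Finset.card
      (Finset.filter_congr (fun v _ => by cases h : par v <;> simp [h]))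
  have hJ1 : 1 ≤ J.card := Finset.card_pos.mpr ⟨j0, hj0⟩
  have hpow : 2 ^ J.card = 2 * 2 ^ (J.card - 1) := by
    rw [← pow_succ']
    congr 1
    omega
  have := hflip false
  simp at this
  cases b <;> omega


lemma evens_eq_bucket : (Finset.univ.filter fun v : V n => evenVertex v) = bucket Finset.univ false := by
  ext v
  simp [bucket, suppIn, par]

lemma odds_eq_bucket : (Finset.univ.filter fun v : V n => ¬ evenVertex v) = bucket Finset.univ true := by
  ext v
  simp [bucket, suppIn, par]

lemma evens_card (hn : 1 ≤ n) :
    (Finset.univ.filter fun v : V n => evenVertex v).card = 2 ^ (n - 1) := by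
  rw [evens_eq_bucket, bucket_card ⟨⟨0, by omega⟩, mem_univ _⟩]
  congr 1
  rw [Finset.card_univ, Fintype.card_fin]

lemma odds_card (hn : 1 ≤ n) :
    (Finset.univ.filter fun v : V n => ¬ evenVertex v).card = 2 ^ (n - 1) := by
  rw [odds_eq_bucket, bucket_card ⟨⟨0, by omega⟩, mem_univ _⟩]
  congr 1
  rw [Finset.card_univ, Fintype.card_fin]

lemma cubeEdges_eq_image : cubeEdges n =
    ((Finset.univ.filter fun v : V n => evenVertex v) ×ˢ (Finset.univ : Finset (Fin n))).image
      (fun p => (p.1, xAdd p.1 (bv p.2))) := by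
  ext p
  rw [mem_cubeEdges_iff, mem_image]
  constructor
  · rintro ⟨h1, j, hj⟩
    exact ⟨(p.1, j), by simp [h1], by rw [← hj]⟩
  · rintro ⟨⟨v, j⟩, hmem, heq⟩
    simp only [mem_product, mem_filter, mem_univ, true_and, and_true] at hmem
    rw [← heq]
    exact ⟨hmem, j, rfl⟩

lemma cubeEdges_card (hn : 1 ≤ n) : (cubeEdges n).card = 2 ^ (n - 1) * n := by
  rw [cubeEdges_eq_image]
  rw [Finset.card_image_of_injOn]
  · rw [Finset.card_product, evens_card hn, Finset.card_univ, Fintype.card_fin]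
  · rintro ⟨v, i⟩ h1 ⟨w, j⟩ h2 heq
    simp only [Prod.mk.injEq] at heq
    obtain ⟨rfl, h⟩ := heq
    have := xAdd_left_injective v h
    have := bv_injective this
    simp [this]

lemma arith_small {e a b D : ℕ} (ha : 1 ≤ a) (hb : b ≤ D) (he : e ≤ a * b) :
    e ≤ D * a + b - D := by
  obtain ⟨a', rfl⟩ : ∃ a', a = a' + 1 := ⟨a - 1, by omega⟩
  have h : a' * b ≤ a' * D := Nat.mul_le_mul_left _ hb
  have key : (a' + 1) * b + D ≤ D * (a' + 1) + b := by
    calc (a' + 1) * b + D = a' * b + (b + D) := by ring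
      _ ≤ a' * D + (b + D) := by omega
      _ = D * (a' + 1) + b := by ring
  omega


variable {M : ℕ}

def q0 : Fin (M + 4) := ⟨0, by omega⟩
def q1 : Fin (M + 4) := ⟨1, by omega⟩
def q2 : Fin (M + 4) := ⟨2, by omega⟩
def q3 : Fin (M + 4) := ⟨3, by omega⟩

def tv : V (M + 4) := fun j => decide (j = q0 ∨ j = q1 ∨ j = q2)
def tv' : V (M + 4) := fun j => decide (j = q1 ∨ j = q2 ∨ j = q3)

lemma q_ne : (q0 : Fin (M+4)) ≠ q1 ∧ (q0 : Fin (M+4)) ≠ q2 ∧ (q0 : Fin (M+4)) ≠ q3 ∧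
    (q1 : Fin (M+4)) ≠ q2 ∧ (q1 : Fin (M+4)) ≠ q3 ∧ (q2 : Fin (M+4)) ≠ q3 := by
  refine ⟨?_, ?_, ?_, ?_, ?_, ?_⟩ <;> · intro h; simp [q0, q1, q2, q3, Fin.ext_iff] at h

lemma tv_filter : (Finset.univ.filter fun j => (tv (M := M) j : Prop)) = {q0, q1, q2} := by
  ext j; simp [tv]

lemma tv'_filter : (Finset.univ.filter fun j => (tv' (M := M) j : Prop)) = {q1, q2, q3} := by
  ext j; simp [tv']

lemma wt_tv : wt (tv (M := M)) = 3 := by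
  unfold wt; rw [tv_filter]
  obtain ⟨h1, h2, h3, h4, h5, h6⟩ := q_ne (M := M)
  exact Finset.card_eq_three.mpr ⟨q0, q1, q2, h1, h2, h4, rfl⟩

lemma wt_tv' : wt (tv' (M := M)) = 3 := by
  unfold wt; rw [tv'_filter]
  obtain ⟨h1, h2, h3, h4, h5, h6⟩ := q_ne (M := M)
  exact Finset.card_eq_three.mpr ⟨q1, q2, q3, h4, h5, h6, rfl⟩

lemma not_even_tv : ¬ evenVertex (tv (M := M)) := by
  have : evenVertex (tv (M := M)) ↔ wt (tv (M := M)) % 2 = 0 := Iff.rfl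
  rw [this, wt_tv]; omega

lemma not_even_tv' : ¬ evenVertex (tv' (M := M)) := by
  have : evenVertex (tv' (M := M)) ↔ wt (tv' (M := M)) % 2 = 0 := Iff.rfl
  rw [this, wt_tv']; omega

lemma tv_ne_bv (j : Fin (M+4)) : tv (M := M) ≠ bv j := by
  intro h
  have h0 := congrFun h q0
  have h1 := congrFun h q1
  obtain ⟨hne, -⟩ := q_ne (M := M)
  simp [tv, bv] at h0 h1
  exact hne (h0.trans h1.symm)

lemma tv'_ne_bv (j : Fin (M+4)) : tv' (M := M) ≠ bv j := by
  intro h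
  have h0 := congrFun h q1
  have h1 := congrFun h q2
  obtain ⟨-, -, -, hne, -⟩ := q_ne (M := M)
  simp [tv', bv] at h0 h1
  exact hne (h0.trans h1.symm)

lemma tv_ne_tv' : tv (M := M) ≠ tv' := by
  intro h
  have h0 := congrFun h q0
  obtain ⟨h1, h2, h3, -⟩ := q_ne (M := M)
  simp [tv, tv', h1, h2, h3] at h0

def U (J : Finset (Fin (M + 4))) : Finset (V (M + 4)) := J.image bv ∪ {tv, tv'}

lemma mem_U {J : Finset (Fin (M+4))} {u : V (M+4)} :
    u ∈ U J ↔ (∃ j ∈ J, u = bv j) ∨ u = tv ∨ u = tv' := by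
  simp only [U, mem_union, mem_image, mem_insert, mem_singleton]
  constructor
  · rintro (⟨j, hj, rfl⟩ | h | h)
    · exact Or.inl ⟨j, hj, rfl⟩
    · exact Or.inr (Or.inl h)
    · exact Or.inr (Or.inr h)
  · rintro (⟨j, hj, rfl⟩ | h | h)
    · exact Or.inl ⟨j, hj, rfl⟩
    · exact Or.inr (Or.inl h)
    · exact Or.inr (Or.inr h)

lemma U_card (J : Finset (Fin (M+4))) : (U J).card = J.card + 2 := by
  unfold U
  rw [card_union_of_disjoint]
  · rw [card_image_of_injective _ bv_injective]
    rw [card_insert_of_notMem (by simp [tv_ne_tv']), card_singleton]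
  · rw [disjoint_left]
    intro u hu hmem
    simp only [mem_image] at hu
    obtain ⟨j, -, rfl⟩ := hu
    simp only [mem_insert, mem_singleton] at hmem
    rcases hmem with h | h
    · exact tv_ne_bv j h.symm
    · exact tv'_ne_bv j h.symm

lemma U_odd {J : Finset (Fin (M+4))} {u : V (M+4)} (hu : u ∈ U J) : par u = true := by
  rw [mem_U] at hu
  rcases hu with ⟨j, -, rfl⟩ | rfl | rfl
  · simp [par, not_even_bv]
  · simp [par, not_even_tv]
  · simp [par, not_even_tv']

/-- membership of the four base coordinates -/
def Quad (J : Finset (Fin (M + 4))) : Prop := q0 ∈ J ∧ q1 ∈ J ∧ q2 ∈ J ∧ q3 ∈ J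

lemma U_supp {J : Finset (Fin (M+4))} (hQ : Quad J) {u : V (M+4)} (hu : u ∈ U J) :
    suppIn u J := by
  obtain ⟨m0, m1, m2, m3⟩ := hQ
  rw [mem_U] at hu
  intro i hi
  rcases hu with ⟨j, hj, rfl⟩ | rfl | rfl
  · simp only [bv, decide_eq_true_eq] at hi
    subst hi; exact hj
  · simp only [tv, decide_eq_true_eq] at hi
    rcases hi with rfl | rfl | rfl <;> assumption
  · simp only [tv', decide_eq_true_eq] at hi
    rcases hi with rfl | rfl | rfl <;> assumption

lemma sumset_subset_bucket {J : Finset (Fin (M+4))} (hQ : Quad J) {b : Bool}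
    {T : Finset (V (M+4))} (hT : T ⊆ bucket J b) :
    Finset.image₂ xAdd T (U J) ⊆ bucket J (!b) := by
  intro x hx
  rw [Finset.mem_image₂] at hx
  obtain ⟨v, hv, u, hu, rfl⟩ := hx
  have hvb := mem_bucket.1 (hT hv)
  rw [mem_bucket]
  constructor
  · intro i hi
    simp only [xAdd_apply] at hi
    cases h1 : v i
    · rw [h1] at hi; simp at hi
      exact U_supp hQ hu i hi
    · exact hvb.1 i h1
  · rw [par_xAdd, hvb.2, U_odd hu]
    cases b <;> rfl

lemma sumset_card_lb {J : Finset (Fin (M+4))} {T : Finset (V (M+4))} {x : V (M+4)}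
    (hx : x ∈ T) : (U J).card ≤ (Finset.image₂ xAdd T (U J)).card := by
  have h : (U J).image (xAdd x) ⊆ Finset.image₂ xAdd T (U J) := by
    intro y hy
    rw [mem_image] at hy
    obtain ⟨u, hu, rfl⟩ := hy
    exact Finset.mem_image₂_of_mem hx hu
  calc (U J).card = ((U J).image (xAdd x)).card :=
        (card_image_of_injective _ (xAdd_left_injective x)).symm
    _ ≤ _ := card_le_card h

lemma pigeon {J : Finset (Fin (M+4))} (hQ : Quad J) {b : Bool} {T : Finset (V (M+4))}
    (hT : T ⊆ bucket J b) (h : 2 ^ (J.card - 1) < T.card + J.card + 2) :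
    bucket J (!b) ⊆ Finset.image₂ xAdd T (U J) := by
  intro w hw
  by_contra hcon
  have hWsub : (U J).image (xAdd w) ⊆ bucket J b \ T := by
    intro y hy
    rw [mem_image] at hy
    obtain ⟨u, hu, rfl⟩ := hy
    rw [mem_sdiff]
    constructor
    · rw [mem_bucket]
      have hwb := mem_bucket.1 hw
      constructor
      · intro i hi
        simp only [xAdd_apply] at hi
        cases h1 : w i
        · rw [h1] at hi; simp at hi
          exact U_supp hQ hu i hi
        · exact hwb.1 i h1
      · rw [par_xAdd, hwb.2, U_odd hu]
        cases b <;> rfl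
    · intro hmem
      apply hcon
      have : w = xAdd (xAdd w u) u := (xAdd_right_self u w).symm
      rw [this]
      exact Finset.mem_image₂_of_mem hmem hu
  have h1 : ((U J).image (xAdd w)).card = J.card + 2 := by
    rw [card_image_of_injective _ (xAdd_left_injective w), U_card]
  have h2 : (bucket J b \ T).card = 2 ^ (J.card - 1) - T.card := by
    rw [card_sdiff_of_subset (hT)]
    rw [bucket_card ⟨q0, hQ.1⟩]
  have h3 := card_le_card hWsub
  have h4 : T.card ≤ 2 ^ (J.card - 1) := by
    rw [← bucket_card ⟨q0, hQ.1⟩ b]; exact card_le_card hT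
  omega


lemma pow_aux : ∀ m : ℕ, 3 ≤ m → m + 3 ≤ 2 ^ m := by
  intro m hm
  induction m, hm using Nat.le_induction with
  | base => norm_num
  | succ n hn ih => rw [pow_succ]; omega

lemma xshuffle (v s u : V n) : xAdd (xAdd (xAdd v s) u) s = xAdd v u := by
  funext i
  simp only [xAdd_apply]
  cases v i <;> cases s i <;> cases u i <;> rfl

lemma flip_injective (s : V n) : Function.Injective (fun v : V n => xAdd v s) := by
  intro a b h
  simp only [] at h
  have := congrArg (fun w => xAdd w s) h
  rwa [xAdd_right_self, xAdd_right_self] at this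

lemma expansion (k : ℕ) : ∀ (J : Finset (Fin (M+4))), J.card = k → Quad J →
    ∀ (b : Bool) (T : Finset (V (M+4))), T ⊆ bucket J b → T.Nonempty →
    min (T.card + J.card + (if J.card = 4 then 0 else 1)) (2 ^ (J.card - 1)) ≤
      (Finset.image₂ xAdd T (U J)).card := by
  induction k using Nat.strong_induction_on with
  | _ k IH =>
  intro J hJk hQ b T hT hTne
  obtain ⟨x0, hx0⟩ := hTne
  have hUle := sumset_card_lb (J := J) (T := T) hx0
  rw [U_card] at hUle
  have hquadsub : ({q0, q1, q2, q3} : Finset (Fin (M+4))) ⊆ J := by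
    intro i hi
    simp only [mem_insert, mem_singleton] at hi
    obtain ⟨m0, m1, m2, m3⟩ := hQ
    rcases hi with rfl | rfl | rfl | rfl <;> assumption
  have hquadcard : ({q0, q1, q2, q3} : Finset (Fin (M+4))).card = 4 := by
    obtain ⟨h1, h2, h3, h4, h5, h6⟩ := q_ne (M := M)
    rw [card_insert_of_notMem (by simp [h1, h2, h3]),
        card_insert_of_notMem (by simp [h4, h5]),
        card_insert_of_notMem (by simp [h6]), card_singleton]
  have hJ4 : 4 ≤ J.card := by
    have := card_le_card hquadsub
    omega
  have hTpos : 1 ≤ T.card := card_pos.mpr ⟨x0, hx0⟩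
  by_cases hc4 : J.card = 4
  · -- base case
    rw [if_pos hc4]
    have h8 : (2:ℕ) ^ (J.card - 1) = 8 := by rw [hc4]; norm_num
    by_cases h3 : T.card ≤ 2
    · omega
    · -- pigeonhole
      have hfull := pigeon hQ hT (by omega)
      have := card_le_card hfull
      rw [bucket_card ⟨q0, hQ.1⟩] at this
      omega
  · -- inductive step
    rw [if_neg hc4]
    have hJ5 : 5 ≤ J.card := by omega
    by_cases hT1 : T.card = 1
    · have : min (T.card + J.card + 1) (2 ^ (J.card - 1)) ≤ J.card + 2 := by
        apply min_le_of_left_le; omega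
      omega
    have hT2 : 2 ≤ T.card := by omega
    -- choose j outside the quad
    have hss : ({q0, q1, q2, q3} : Finset (Fin (M+4))) ⊂ J := by
      rw [Finset.ssubset_iff_of_subset hquadsub]
      by_contra hcon
      push_neg at hcon
      have : J ⊆ ({q0, q1, q2, q3} : Finset (Fin (M+4))) := fun i hi => by
        by_contra h
        exact h (hcon i hi)
      have := card_le_card this
      omega
    obtain ⟨j, hjJ, hjq⟩ := Finset.exists_of_ssubset hss
    have hjq0 : j ≠ q0 := fun h => hjq (by simp [h])
    have hjq1 : j ≠ q1 := fun h => hjq (by simp [h])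
    have hjq2 : j ≠ q2 := fun h => hjq (by simp [h])
    have hjq3 : j ≠ q3 := fun h => hjq (by simp [h])
    set J' := J.erase j with hJ'def
    have hJ'card : J'.card = J.card - 1 := card_erase_of_mem hjJ
    have hQ' : Quad J' := by
      obtain ⟨m0, m1, m2, m3⟩ := hQ
      exact ⟨mem_erase.mpr ⟨fun h => hjq0 h.symm, m0⟩,
             mem_erase.mpr ⟨fun h => hjq1 h.symm, m1⟩,
             mem_erase.mpr ⟨fun h => hjq2 h.symm, m2⟩,
             mem_erase.mpr ⟨fun h => hjq3 h.symm, m3⟩⟩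
    have hjJ' : j ∉ J' := notMem_erase j J
    have hUJ'sub : U J' ⊆ U J := by
      intro u hu
      rw [mem_U] at hu ⊢
      rcases hu with ⟨i, hi, rfl⟩ | h | h
      · exact Or.inl ⟨i, mem_of_mem_erase hi, rfl⟩
      · exact Or.inr (Or.inl h)
      · exact Or.inr (Or.inr h)
    have hUJ'j : ∀ u ∈ U J', u j = false := by
      intro u hu
      cases h : u j
      · rfl
      · exact absurd (U_supp hQ' hu j h) hjJ'
    set T0 := T.filter (fun v => v j = false) with hT0def
    set T1 := T.filter (fun v => v j = true) with hT1def
    set T1' := T1.image (fun v => xAdd v (bv j)) with hT1'def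
    have hbvj : ∀ (i : Fin (M+4)), bv j i = true ↔ i = j := by
      intro i; simp [bv]
    have hT0j : ∀ v ∈ T0, v j = false := fun v hv => (mem_filter.1 hv).2
    have hT1j : ∀ v ∈ T1, v j = true := fun v hv => (mem_filter.1 hv).2
    have hT1'j : ∀ v ∈ T1', v j = false := by
      intro v hv
      rw [hT1'def, mem_image] at hv
      obtain ⟨w, hw, rfl⟩ := hv
      simp only [xAdd_apply]
      rw [hT1j w hw]
      simp [bv]
    have hcards : T0.card + T1.card = T.card := by
      rw [hT0def, hT1def]
      rw [← Finset.card_filter_add_card_filter_not (s := T)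
        (p := fun v => v j = false)]
      congr 2
      apply Finset.filter_congr
      intro v _
      cases h : v j <;> simp [h]
    have hT1'card : T1'.card = T1.card := card_image_of_injective _ (flip_injective (bv j))
    have hT0sub : T0 ⊆ bucket J' b := by
      intro v hv
      have hvT : v ∈ T := mem_filter.1 hv |>.1
      have hvb := mem_bucket.1 (hT hvT)
      rw [mem_bucket]
      refine ⟨?_, hvb.2⟩
      intro i hi
      rw [mem_erase]
      refine ⟨?_, hvb.1 i hi⟩
      intro h
      rw [h] at hi
      rw [hT0j v hv] at hi
      exact Bool.false_ne_true hi
    have hT1'sub : T1' ⊆ bucket J' (!b) := by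
      intro x hx
      rw [hT1'def, mem_image] at hx
      obtain ⟨v, hv, rfl⟩ := hx
      have hvT : v ∈ T := mem_filter.1 hv |>.1
      have hvb := mem_bucket.1 (hT hvT)
      rw [mem_bucket]
      constructor
      · intro i hi
        simp only [xAdd_apply] at hi
        rw [mem_erase]
        by_cases hij : i = j
        · exfalso
          rw [hij, hT1j v hv] at hi
          simp [bv] at hi
        · refine ⟨hij, ?_⟩
          apply hvb.1 i
          have : bv j i = false := by
            cases h : bv j i
            · rfl
            · exact absurd ((hbvj i).1 h) hij
          rwa [this, Bool.xor_false] at hi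
      · rw [par_xAdd, hvb.2]
        have : par (bv j) = true := by
          simp [par, not_even_bv]
        rw [this]
        cases b <;> rfl
    set S0 := (Finset.image₂ xAdd T0 (U J')) ∪ T1' with hS0def
    set S1 := (Finset.image₂ xAdd T1' (U J')) ∪ T0 with hS1def
    have hS0bucket : S0 ⊆ bucket J' (!b) := by
      rw [hS0def]
      apply Finset.union_subset (sumset_subset_bucket hQ' hT0sub) hT1'sub
    have hS1bucket : S1 ⊆ bucket J' b := by
      rw [hS1def]
      refine Finset.union_subset ?_ hT0sub
      have := sumset_subset_bucket hQ' hT1'sub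
      rwa [Bool.not_not] at this
    have hS0sub : S0 ⊆ Finset.image₂ xAdd T (U J) := by
      rw [hS0def]
      apply Finset.union_subset
      · refine (Finset.image₂_subset (filter_subset _ _) hUJ'sub)
      · intro x hx
        rw [hT1'def, mem_image] at hx
        obtain ⟨v, hv, rfl⟩ := hx
        exact Finset.mem_image₂_of_mem (mem_filter.1 hv |>.1)
          (mem_U.2 (Or.inl ⟨j, hjJ, rfl⟩))
    have hS1sub : S1.image (fun x => xAdd x (bv j)) ⊆ Finset.image₂ xAdd T (U J) := by
      intro y hy
      rw [mem_image] at hy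
      obtain ⟨x, hx, rfl⟩ := hy
      rw [hS1def, mem_union] at hx
      rcases hx with hx | hx
      · rw [Finset.mem_image₂] at hx
        obtain ⟨v', hv', u, hu, rfl⟩ := hx
        rw [hT1'def, mem_image] at hv'
        obtain ⟨v, hv, rfl⟩ := hv'
        rw [xshuffle]
        exact Finset.mem_image₂_of_mem (mem_filter.1 hv |>.1) (hUJ'sub hu)
      · exact Finset.mem_image₂_of_mem (mem_filter.1 hx |>.1)
          (mem_U.2 (Or.inl ⟨j, hjJ, rfl⟩))
    have hS0j : ∀ x ∈ S0, x j = false := by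
      intro x hx
      rw [hS0def, mem_union] at hx
      rcases hx with hx | hx
      · rw [Finset.mem_image₂] at hx
        obtain ⟨v, hv, u, hu, rfl⟩ := hx
        simp only [xAdd_apply]
        rw [hT0j v hv, hUJ'j u hu]
        rfl
      · exact hT1'j x hx
    have hdisj : Disjoint S0 (S1.image (fun x => xAdd x (bv j))) := by
      rw [disjoint_left]
      intro x hx0 hx1
      have h0 := hS0j x hx0
      rw [mem_image] at hx1
      obtain ⟨y, hy, rfl⟩ := hx1
      have hyj : y j = false := by
        rw [hS1def, mem_union] at hy
        rcases hy with hy | hy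
        · rw [Finset.mem_image₂] at hy
          obtain ⟨v, hv, u, hu, rfl⟩ := hy
          simp only [xAdd_apply]
          rw [hT1'j v hv, hUJ'j u hu]
          rfl
        · exact hT0j y hy
      simp only [xAdd_apply] at h0
      rw [hyj] at h0
      simp [bv] at h0
    have hMlb : S0.card + S1.card ≤ (Finset.image₂ xAdd T (U J)).card := by
      have h1 : S0 ∪ S1.image (fun x => xAdd x (bv j)) ⊆ Finset.image₂ xAdd T (U J) :=
        Finset.union_subset hS0sub hS1sub
      have h2 := card_le_card h1
      rw [card_union_of_disjoint hdisj] at h2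
      rw [card_image_of_injective _ (flip_injective (bv j))] at h2
      exact h2
    -- numeric setup
    have hc'eq : (bucket J' (!b) : Finset (V (M+4))).card = 2 ^ (J'.card - 1) :=
      bucket_card ⟨q0, hQ'.1⟩ _
    have hc'eq2 : (bucket J' b : Finset (V (M+4))).card = 2 ^ (J'.card - 1) :=
      bucket_card ⟨q0, hQ'.1⟩ _
    have hS0le : S0.card ≤ 2 ^ (J'.card - 1) := by
      rw [← hc'eq]; exact card_le_card hS0bucket
    have hS1le : S1.card ≤ 2 ^ (J'.card - 1) := by
      rw [← hc'eq2]; exact card_le_card hS1bucket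
    have hS0ge1 : T1.card ≤ S0.card := by
      rw [← hT1'card]
      exact card_le_card (subset_union_right)
    have hS1ge0 : T0.card ≤ S1.card := card_le_card (subset_union_right)
    have hS0gem : (Finset.image₂ xAdd T0 (U J')).card ≤ S0.card :=
      card_le_card (subset_union_left)
    have hS1gem : (Finset.image₂ xAdd T1' (U J')).card ≤ S1.card :=
      card_le_card (subset_union_left)
    have ha0le : T0.card ≤ 2 ^ (J'.card - 1) := by
      rw [← hc'eq2]; exact card_le_card hT0sub
    have ha1le : T1.card ≤ 2 ^ (J'.card - 1) := by
      rw [← hc'eq, ← hT1'card]; exact card_le_card hT1'sub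
    have hcp : J.card + 1 ≤ 2 ^ (J'.card - 1) := by
      have h1 : J'.card - 1 = J.card - 2 := by omega
      have h2 := pow_aux (J.card - 2) (by omega)
      have h3 : J.card - 2 + 3 = J.card + 1 := by omega
      rw [h1]
      omega
    have hpow2 : 2 ^ (J.card - 1) = 2 * 2 ^ (J'.card - 1) := by
      have h1 : J.card - 1 = (J'.card - 1) + 1 := by omega
      rw [h1, pow_succ]
      ring
    -- child bounds
    have child : ∀ (bb : Bool) (T'' : Finset (V (M+4))), T'' ⊆ bucket J' bb → T''.Nonempty →
        min (T''.card + (J.card - 1)) (2 ^ (J'.card - 1)) ≤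
          (Finset.image₂ xAdd T'' (U J')).card := by
      intro bb T'' hsub hne
      have h1 := IH J'.card (by omega) J' rfl hQ' bb T'' hsub hne
      refine le_trans ?_ h1
      apply min_le_min_right
      split <;> omega
    have childfull : ∀ (bb : Bool) (T'' : Finset (V (M+4))), T'' ⊆ bucket J' bb →
        2 ^ (J'.card - 1) < T''.card + J.card + 1 →
        2 ^ (J'.card - 1) ≤ (Finset.image₂ xAdd T'' (U J')).card := by
      intro bb T'' hsub hlt
      have h1 := pigeon hQ' hsub (by omega)
      have h2 := card_le_card h1
      rwa [bucket_card ⟨q0, hQ'.1⟩] at h2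
    rcases Finset.eq_empty_or_nonempty T0 with hT0e | hT0ne
    · -- T0 empty
      have ha0 : T0.card = 0 := by rw [hT0e]; rfl
      have hT1ne : T1.Nonempty := by
        rw [← card_pos]; omega
      have hT1'ne : T1'.Nonempty := hT1ne.image _
      by_cases hc1 : 2 ^ (J'.card - 1) < T1'.card + J.card + 1
      · have hfull := childfull (!b) T1' hT1'sub hc1
        have := le_trans hfull hS1gem
        omega
      · have hch := child (!b) T1' hT1'sub hT1'ne
        have := le_trans hch hS1gem
        rw [hT1'card] at this hc1
        omega
    rcases Finset.eq_empty_or_nonempty T1 with hT1e | hT1ne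
    · -- T1 empty
      have ha1 : T1.card = 0 := by rw [hT1e]; rfl
      by_cases hc0 : 2 ^ (J'.card - 1) < T0.card + J.card + 1
      · have hfull := childfull b T0 hT0sub hc0
        have := le_trans hfull hS0gem
        omega
      · have hch := child b T0 hT0sub hT0ne
        have := le_trans hch hS0gem
        omega
    · -- both nonempty
      have hT1'ne : T1'.Nonempty := hT1ne.image _
      have hch0 := child b T0 hT0sub hT0ne
      have hch1 := child (!b) T1' hT1'sub hT1'ne
      have hm0 := le_trans hch0 hS0gem
      have hm1 := le_trans hch1 hS1gem
      rw [hT1'card] at hm1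
      by_cases hc0 : 2 ^ (J'.card - 1) < T0.card + J.card + 1
      · have hfull0 := le_trans (childfull b T0 hT0sub hc0) hS0gem
        by_cases hc1 : 2 ^ (J'.card - 1) < T1'.card + J.card + 1
        · have hfull1 := le_trans (childfull (!b) T1' hT1'sub hc1) hS1gem
          omega
        · rw [hT1'card] at hc1
          omega
      · by_cases hc1 : 2 ^ (J'.card - 1) < T1'.card + J.card + 1
        · have hfull1 := le_trans (childfull (!b) T1' hT1'sub hc1) hS1gem
          rw [hT1'card] at hc1
          omega
        · rw [hT1'card] at hc1
          omega


theorem master (M : ℕ) (S : Finset (V (M+4)))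
    (hSsub : S ⊆ Finset.univ.filter (fun v : V (M+4) => evenVertex v))
    (hScard : S.card = 2 ^ (M+3) - (M+5))
    (hStar : ∀ T ⊆ S, T.Nonempty →
      T.card + (M+5) ≤ (Finset.image₂ xAdd T (U Finset.univ)).card) :
    ∃ E : Finset (V (M+4) × V (M+4)),
      (∀ p ∈ E, evenVertex p.1 ∧ ¬ evenVertex p.2) ∧
      cubeEdges (M+4) ⊆ E ∧
      (E \ cubeEdges (M+4)).card = 2 ^ (M+4) - (M+5) ∧
      E.card = (M+5) * 2 ^ (M+3) + 2 ^ (M+3) - (M+5) ∧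
      ∀ A' B' : Finset (V (M+4)),
        (∀ v ∈ A', evenVertex v) → (∀ v ∈ B', ¬ evenVertex v) →
        A'.Nonempty → B'.Nonempty →
        (E.filter fun p => p.1 ∈ A' ∧ p.2 ∈ B').card ≤
          (M+5) * A'.card + B'.card - (M+5) := by
  classical
  set A : Finset (V (M+4)) := Finset.univ.filter (fun v : V (M+4) => evenVertex v) with hAdef
  have hAcard : A.card = 2 ^ (M+3) := evens_card (by omega)
  have hP5 : M + 5 ≤ 2 ^ (M+3) := by
    have := pow_aux (M+3) (by omega)
    omega
  set addT : Finset (V (M+4) × V (M+4)) := A.image (fun v => (v, xAdd v tv)) with haddT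
  set addT' : Finset (V (M+4) × V (M+4)) := S.image (fun v => (v, xAdd v tv')) with haddT'
  set E : Finset (V (M+4) × V (M+4)) := cubeEdges (M+4) ∪ (addT ∪ addT') with hEdef
  have hSA : ∀ v ∈ S, evenVertex v := by
    intro v hv
    have := hSsub hv
    rw [hAdef, mem_filter] at this
    exact this.2
  -- membership characterizations
  have haddT_mem : ∀ {p : V (M+4) × V (M+4)}, p ∈ addT ↔ (p.1 ∈ A ∧ p.2 = xAdd p.1 tv) := by
    intro p
    rw [haddT, mem_image]
    constructor
    · rintro ⟨v, hv, rfl⟩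
      exact ⟨hv, rfl⟩
    · rintro ⟨h1, h2⟩
      exact ⟨p.1, h1, by rw [← h2]⟩
  have haddT'_mem : ∀ {p : V (M+4) × V (M+4)}, p ∈ addT' ↔ (p.1 ∈ S ∧ p.2 = xAdd p.1 tv') := by
    intro p
    rw [haddT', mem_image]
    constructor
    · rintro ⟨v, hv, rfl⟩
      exact ⟨hv, rfl⟩
    · rintro ⟨h1, h2⟩
      exact ⟨p.1, h1, by rw [← h2]⟩
  -- disjointness
  have hdisj1 : Disjoint (cubeEdges (M+4)) (addT ∪ addT') := by
    rw [disjoint_left]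
    intro p hp hp2
    rw [mem_cubeEdges_iff] at hp
    obtain ⟨-, j, hj⟩ := hp
    rw [mem_union] at hp2
    rcases hp2 with h | h
    · rw [haddT_mem] at h
      rw [h.2] at hj
      exact tv_ne_bv j (xAdd_left_injective p.1 hj)
    · rw [haddT'_mem] at h
      rw [h.2] at hj
      exact tv'_ne_bv j (xAdd_left_injective p.1 hj)
  have hdisj2 : Disjoint addT addT' := by
    rw [disjoint_left]
    intro p hp hp'
    rw [haddT_mem] at hp
    rw [haddT'_mem] at hp'
    have : xAdd p.1 tv = xAdd p.1 tv' := by rw [← hp.2, ← hp'.2]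
    exact tv_ne_tv' (xAdd_left_injective p.1 this)
  have haddTcard : addT.card = 2 ^ (M+3) := by
    rw [haddT, card_image_of_injective, hAcard]
    intro v w h
    exact (Prod.ext_iff.1 h).1
  have haddT'card : addT'.card = 2 ^ (M+3) - (M+5) := by
    rw [haddT', card_image_of_injective, hScard]
    intro v w h
    exact (Prod.ext_iff.1 h).1
  have hcubecard : (cubeEdges (M+4)).card = 2 ^ (M+3) * (M+4) := cubeEdges_card (by omega)
  refine ⟨E, ?_, ?_, ?_, ?_, ?_⟩
  · -- all edges go from even to odd
    intro p hp
    rw [hEdef, mem_union, mem_union] at hp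
    rcases hp with hp | hp | hp
    · rw [cubeEdges, mem_filter] at hp
      exact ⟨hp.2.1, hp.2.2.1⟩
    · rw [haddT_mem] at hp
      obtain ⟨h1, h2⟩ := hp
      rw [hAdef, mem_filter] at h1
      refine ⟨h1.2, ?_⟩
      rw [h2, even_xAdd_iff]
      intro h
      exact not_even_tv (h.1 h1.2)
    · rw [haddT'_mem] at hp
      obtain ⟨h1, h2⟩ := hp
      have he := hSA _ h1
      refine ⟨he, ?_⟩
      rw [h2, even_xAdd_iff]
      intro h
      exact not_even_tv' (h.1 he)
  · rw [hEdef]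
    exact subset_union_left
  · -- count of added edges
    rw [hEdef, Finset.union_sdiff_cancel_left hdisj1]
    rw [card_union_of_disjoint hdisj2, haddTcard, haddT'card]
    have hpow : (2:ℕ) ^ (M+4) = 2 * 2 ^ (M+3) := by rw [pow_succ]; ring
    omega
  · -- total count
    rw [hEdef, card_union_of_disjoint hdisj1, card_union_of_disjoint hdisj2,
      hcubecard, haddTcard, haddT'card]
    have e1 : 2 ^ (M+3) * (M+4) + 2 ^ (M+3) = (M+5) * 2 ^ (M+3) := by ring
    omega
  · -- the Laman inequality
    intro A' B' hA' hB' hA'ne hB'ne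
    set deg : V (M+4) → ℕ := fun v => (B'.filter fun w => (v, w) ∈ E).card with hdegdef
    have hErange : ∀ v w, (v, w) ∈ E → w ∈ (U (Finset.univ : Finset (Fin (M+4)))).image (xAdd v) := by
      intro v w hvw
      rw [hEdef, mem_union, mem_union] at hvw
      rcases hvw with h | h | h
      · rw [mem_cubeEdges_iff] at h
        obtain ⟨-, j, hj⟩ := h
        rw [mem_image]
        exact ⟨bv j, mem_U.2 (Or.inl ⟨j, mem_univ j, rfl⟩), hj.symm⟩
      · rw [haddT_mem] at h
        rw [mem_image]
        exact ⟨tv, mem_U.2 (Or.inr (Or.inl rfl)), h.2.symm⟩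
      · rw [haddT'_mem] at h
        rw [mem_image]
        exact ⟨tv', mem_U.2 (Or.inr (Or.inr rfl)), h.2.symm⟩
    have hErange' : ∀ v, v ∉ S → ∀ w, (v, w) ∈ E →
        w ∈ ((U (Finset.univ : Finset (Fin (M+4)))).erase tv').image (xAdd v) := by
      intro v hvS w hvw
      rw [hEdef, mem_union, mem_union] at hvw
      rcases hvw with h | h | h
      · rw [mem_cubeEdges_iff] at h
        obtain ⟨-, j, hj⟩ := h
        rw [mem_image]
        refine ⟨bv j, mem_erase.2 ⟨fun hc => tv'_ne_bv j hc.symm, mem_U.2 (Or.inl ⟨j, mem_univ j, rfl⟩)⟩, hj.symm⟩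
      · rw [haddT_mem] at h
        rw [mem_image]
        exact ⟨tv, mem_erase.2 ⟨tv_ne_tv', mem_U.2 (Or.inr (Or.inl rfl))⟩, h.2.symm⟩
      · rw [haddT'_mem] at h
        exact absurd h.1 hvS
    have hUcard : (U (Finset.univ : Finset (Fin (M+4)))).card = M + 6 := by
      rw [U_card, Finset.card_univ, Fintype.card_fin]
    have htv'U : tv' ∈ U (Finset.univ : Finset (Fin (M+4))) := mem_U.2 (Or.inr (Or.inr rfl))
    have hdeg_le : ∀ v, deg v ≤ M + 6 := by
      intro v
      rw [hdegdef]
      have hsub : (B'.filter fun w => (v, w) ∈ E) ⊆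
          (U (Finset.univ : Finset (Fin (M+4)))).image (xAdd v) := by
        intro w hw
        rw [mem_filter] at hw
        exact hErange v w hw.2
      calc (B'.filter fun w => (v, w) ∈ E).card
          ≤ ((U (Finset.univ : Finset (Fin (M+4)))).image (xAdd v)).card := card_le_card hsub
        _ ≤ (U (Finset.univ : Finset (Fin (M+4)))).card := card_image_le
        _ = M + 6 := hUcard
    have hdeg_le' : ∀ v, v ∉ S → deg v ≤ M + 5 := by
      intro v hv
      rw [hdegdef]
      have hsub : (B'.filter fun w => (v, w) ∈ E) ⊆
          ((U (Finset.univ : Finset (Fin (M+4)))).erase tv').image (xAdd v) := by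
        intro w hw
        rw [mem_filter] at hw
        exact hErange' v hv w hw.2
      calc (B'.filter fun w => (v, w) ∈ E).card
          ≤ (((U (Finset.univ : Finset (Fin (M+4)))).erase tv').image (xAdd v)).card :=
            card_le_card hsub
        _ ≤ ((U (Finset.univ : Finset (Fin (M+4)))).erase tv').card := card_image_le
        _ = M + 5 := by rw [card_erase_of_mem htv'U, hUcard]; omega
    set F := A'.filter (fun v => M + 6 ≤ deg v) with hFdef
    have hFS : F ⊆ S := by
      intro v hv
      rw [hFdef, mem_filter] at hv
      by_contra hvS
      have := hdeg_le' v hvS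
      omega
    have hFA' : F ⊆ A' := filter_subset _ _
    have hFfull : ∀ v ∈ F, (U (Finset.univ : Finset (Fin (M+4)))).image (xAdd v) ⊆ B' := by
      intro v hv
      rw [hFdef, mem_filter] at hv
      have hsub : (B'.filter fun w => (v, w) ∈ E) ⊆
          (U (Finset.univ : Finset (Fin (M+4)))).image (xAdd v) := by
        intro w hw
        rw [mem_filter] at hw
        exact hErange v w hw.2
      have hicard : ((U (Finset.univ : Finset (Fin (M+4)))).image (xAdd v)).card = M + 6 := by
        rw [card_image_of_injective _ (xAdd_left_injective v), hUcard]
      have heq : (B'.filter fun w => (v, w) ∈ E) =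
          (U (Finset.univ : Finset (Fin (M+4)))).image (xAdd v) := by
        apply Finset.eq_of_subset_of_card_le hsub
        rw [hicard]
        exact hv.2
      rw [← heq]
      exact filter_subset _ _
    have hsum : (E.filter fun p => p.1 ∈ A' ∧ p.2 ∈ B').card ≤ ∑ v ∈ A', deg v := by
      have hsub : (E.filter fun p => p.1 ∈ A' ∧ p.2 ∈ B') ⊆
          A'.biUnion (fun v => (B'.filter fun w => (v, w) ∈ E).image (fun w => (v, w))) := by
        intro p hp
        rw [mem_filter] at hp
        obtain ⟨hpE, hp1, hp2⟩ := hp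
        rw [mem_biUnion]
        refine ⟨p.1, hp1, ?_⟩
        rw [mem_image]
        refine ⟨p.2, ?_, rfl⟩
        rw [mem_filter]
        exact ⟨hp2, hpE⟩
      calc (E.filter fun p => p.1 ∈ A' ∧ p.2 ∈ B').card
          ≤ (A'.biUnion (fun v => (B'.filter fun w => (v, w) ∈ E).image (fun w => (v, w)))).card :=
            card_le_card hsub
        _ ≤ ∑ v ∈ A', ((B'.filter fun w => (v, w) ∈ E).image (fun w => (v, w))).card :=
            card_biUnion_le
        _ = ∑ v ∈ A', deg v := by
            apply Finset.sum_congr rfl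
            intro v _
            rw [card_image_of_injective]
            intro w w' h
            exact (Prod.ext_iff.1 h).2
    have hsplit : ∑ v ∈ A', deg v ≤ (M+5) * A'.card + F.card := by
      have h1 : ∑ v ∈ A' \ F, deg v + ∑ v ∈ F, deg v = ∑ v ∈ A', deg v :=
        Finset.sum_sdiff hFA'
      have h2 : ∑ v ∈ F, deg v ≤ F.card * (M + 6) := by
        apply Finset.sum_le_card_nsmul
        intro v _
        exact hdeg_le v
      have h3 : ∑ v ∈ A' \ F, deg v ≤ (A' \ F).card * (M + 5) := by
        apply Finset.sum_le_card_nsmul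
        intro v hv
        rw [mem_sdiff] at hv
        have hnot := hv.2
        rw [hFdef, mem_filter] at hnot
        push_neg at hnot
        by_cases hvS : v ∈ S
        · have := hnot hv.1
          omega
        · exact hdeg_le' v hvS
      have h4 : (A' \ F).card = A'.card - F.card := card_sdiff_of_subset hFA'
      have h5 : F.card ≤ A'.card := card_le_card hFA'
      obtain ⟨c, hc⟩ : ∃ c, A'.card = F.card + c := ⟨A'.card - F.card, by omega⟩
      have h6 : (A' \ F).card = c := by omega
      have key : c * (M + 5) + F.card * (M + 6) = (M+5) * (F.card + c) + F.card := by ring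
      rw [hc]
      rw [h6] at h3
      omega
    by_cases hFne : F.Nonempty
    · have h2 := hStar F hFS hFne
      have h3 : Finset.image₂ xAdd F (U Finset.univ) ⊆ B' := by
        intro x hx
        rw [Finset.mem_image₂] at hx
        obtain ⟨v, hv, u, hu, rfl⟩ := hx
        exact hFfull v hv (mem_image_of_mem (xAdd v) hu)
      have h4 : F.card + (M+5) ≤ B'.card := le_trans h2 (card_le_card h3)
      have h5 := le_trans hsum hsplit
      set Y := (M+5) * A'.card with hY
      omega
    · have hF0 : F.card = 0 := by
        rw [Finset.not_nonempty_iff_eq_empty] at hFne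
        rw [hFne]
        rfl
      by_cases hbd : M + 5 ≤ B'.card
      · have h5 := le_trans hsum hsplit
        set Y := (M+5) * A'.card with hY
        omega
      · have hab : (E.filter fun p => p.1 ∈ A' ∧ p.2 ∈ B').card ≤ A'.card * B'.card := by
          have hsub : (E.filter fun p => p.1 ∈ A' ∧ p.2 ∈ B') ⊆ A' ×ˢ B' := by
            intro p hp
            rw [mem_filter] at hp
            rw [mem_product]
            exact hp.2
          have := card_le_card hsub
          rwa [card_product] at this
        exact arith_small (card_pos.mpr hA'ne) (by omega) hab


def sv1 : V (0+4) := fun _ => false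
def sv2 : V (0+4) := fun j => decide (j.val < 2)
def sv3 : V (0+4) := fun j => decide (2 ≤ j.val)
def S5 : Finset (V (0+4)) := {sv1, sv2, sv3}

set_option maxRecDepth 8000 in
lemma p1 : 6 ≤ (Finset.image₂ xAdd ({sv1} : Finset (V (0+4))) (U Finset.univ)).card := by decide
set_option maxRecDepth 8000 in
lemma p2 : 6 ≤ (Finset.image₂ xAdd ({sv2} : Finset (V (0+4))) (U Finset.univ)).card := by decide
set_option maxRecDepth 8000 in
lemma p3 : 6 ≤ (Finset.image₂ xAdd ({sv3} : Finset (V (0+4))) (U Finset.univ)).card := by decide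
set_option maxRecDepth 8000 in
lemma p12 : 7 ≤ (Finset.image₂ xAdd ({sv1, sv2} : Finset (V (0+4))) (U Finset.univ)).card := by decide
set_option maxRecDepth 8000 in
lemma p13 : 7 ≤ (Finset.image₂ xAdd ({sv1, sv3} : Finset (V (0+4))) (U Finset.univ)).card := by decide
set_option maxRecDepth 8000 in
lemma p23 : 7 ≤ (Finset.image₂ xAdd ({sv2, sv3} : Finset (V (0+4))) (U Finset.univ)).card := by decide
set_option maxRecDepth 8000 in
lemma p123 : 8 ≤ (Finset.image₂ xAdd ({sv1, sv2, sv3} : Finset (V (0+4))) (U Finset.univ)).card := by decide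

lemma sv_ne : sv1 ≠ sv2 ∧ sv1 ≠ sv3 ∧ sv2 ≠ sv3 := by decide

lemma hS5 : ∀ T ⊆ S5, T.Nonempty →
    T.card + 5 ≤ (Finset.image₂ xAdd T (U (Finset.univ : Finset (Fin (0+4))))).card := by
  intro T hsub hne
  obtain ⟨hn12, hn13, hn23⟩ := sv_ne
  have hmem : ∀ x ∈ T, x = sv1 ∨ x = sv2 ∨ x = sv3 := by
    intro x hx
    have := hsub hx
    simpa [S5] using this
  have hTeq : ∀ (P1 P2 P3 : Prop), (P1 ↔ sv1 ∈ T) → (P2 ↔ sv2 ∈ T) → (P3 ↔ sv3 ∈ T) → True :=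
    fun _ _ _ _ _ _ => trivial
  by_cases h1 : sv1 ∈ T <;> by_cases h2 : sv2 ∈ T <;> by_cases h3 : sv3 ∈ T
  · -- all three
    have hT : T = {sv1, sv2, sv3} := by
      apply Finset.Subset.antisymm
      · intro x hx; simpa [S5] using hsub hx
      · intro x hx
        simp only [mem_insert, mem_singleton] at hx
        rcases hx with rfl | rfl | rfl <;> assumption
    rw [hT]
    have hc : ({sv1, sv2, sv3} : Finset (V (0+4))).card = 3 := by decide
    rw [hc]
    exact p123
  · have hT : T = {sv1, sv2} := by
      apply Finset.Subset.antisymm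
      · intro x hx
        rcases hmem x hx with rfl | rfl | rfl
        · simp
        · simp
        · exact absurd hx h3
      · intro x hx
        simp only [mem_insert, mem_singleton] at hx
        rcases hx with rfl | rfl <;> assumption
    rw [hT]
    have hc : ({sv1, sv2} : Finset (V (0+4))).card = 2 := by decide
    rw [hc]
    exact p12
  · have hT : T = {sv1, sv3} := by
      apply Finset.Subset.antisymm
      · intro x hx
        rcases hmem x hx with rfl | rfl | rfl
        · simp
        · exact absurd hx h2
        · simp
      · intro x hx
        simp only [mem_insert, mem_singleton] at hx
        rcases hx with rfl | rfl <;> assumption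
    rw [hT]
    have hc : ({sv1, sv3} : Finset (V (0+4))).card = 2 := by decide
    rw [hc]
    exact p13
  · have hT : T = {sv1} := by
      apply Finset.Subset.antisymm
      · intro x hx
        rcases hmem x hx with rfl | rfl | rfl
        · simp
        · exact absurd hx h2
        · exact absurd hx h3
      · intro x hx
        simp only [mem_singleton] at hx
        rcases hx with rfl <;> assumption
    rw [hT]
    have hc : ({sv1} : Finset (V (0+4))).card = 1 := by decide
    rw [hc]
    exact p1
  · have hT : T = {sv2, sv3} := by
      apply Finset.Subset.antisymm
      · intro x hx
        rcases hmem x hx with rfl | rfl | rfl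
        · exact absurd hx h1
        · simp
        · simp
      · intro x hx
        simp only [mem_insert, mem_singleton] at hx
        rcases hx with rfl | rfl <;> assumption
    rw [hT]
    have hc : ({sv2, sv3} : Finset (V (0+4))).card = 2 := by decide
    rw [hc]
    exact p23
  · have hT : T = {sv2} := by
      apply Finset.Subset.antisymm
      · intro x hx
        rcases hmem x hx with rfl | rfl | rfl
        · exact absurd hx h1
        · simp
        · exact absurd hx h3
      · intro x hx
        simp only [mem_singleton] at hx
        rcases hx with rfl <;> assumption
    rw [hT]
    have hc : ({sv2} : Finset (V (0+4))).card = 1 := by decide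
    rw [hc]
    exact p2
  · have hT : T = {sv3} := by
      apply Finset.Subset.antisymm
      · intro x hx
        rcases hmem x hx with rfl | rfl | rfl
        · exact absurd hx h1
        · exact absurd hx h2
        · simp
      · intro x hx
        simp only [mem_singleton] at hx
        rcases hx with rfl <;> assumption
    rw [hT]
    have hc : ({sv3} : Finset (V (0+4))).card = 1 := by decide
    rw [hc]
    exact p3
  · -- empty: contradiction
    exfalso
    obtain ⟨x, hx⟩ := hne
    rcases hmem x hx with rfl | rfl | rfl
    · exact h1 hx
    · exact h2 hx
    · exact h3 hx

lemma almost (M : ℕ) :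
    ∃ E : Finset (V (M+4) × V (M+4)),
      (∀ p ∈ E, evenVertex p.1 ∧ ¬ evenVertex p.2) ∧
      cubeEdges (M+4) ⊆ E ∧
      (E \ cubeEdges (M+4)).card = 2 ^ (M+4) - (M+5) ∧
      E.card = (M+5) * 2 ^ (M+3) + 2 ^ (M+3) - (M+5) ∧
      ∀ A' B' : Finset (V (M+4)),
        (∀ v ∈ A', evenVertex v) → (∀ v ∈ B', ¬ evenVertex v) →
        A'.Nonempty → B'.Nonempty →
        (E.filter fun p => p.1 ∈ A' ∧ p.2 ∈ B').card ≤
          (M+5) * A'.card + B'.card - (M+5) := by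
  rcases M with _ | M'
  · exact master 0 S5 (by decide) (by decide) hS5
  · set M := M' + 1 with hM
    have hle : 2 ^ (M+3) - (M+5) ≤
        (Finset.univ.filter fun v : V (M+4) => evenVertex v).card := by
      rw [evens_card (by omega)]
      have : (M : ℕ) + 4 - 1 = M + 3 := by omega
      rw [this]
      exact Nat.sub_le _ _
    obtain ⟨S, hSsub, hScard⟩ := Finset.exists_subset_card_eq hle
    apply master M S hSsub hScard
    intro T hTS hTne
    have hQ : Quad (Finset.univ : Finset (Fin (M+4))) :=
      ⟨mem_univ _, mem_univ _, mem_univ _, mem_univ _⟩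
    have hTbucket : T ⊆ bucket Finset.univ false := by
      rw [← evens_eq_bucket]
      intro v hv
      exact hSsub (hTS hv)
    have hexp := expansion (Finset.univ : Finset (Fin (M+4))).card Finset.univ rfl hQ
      false T hTbucket hTne
    have hucard : (Finset.univ : Finset (Fin (M+4))).card = M + 4 := by
      rw [Finset.card_univ, Fintype.card_fin]
    rw [hucard] at hexp
    rw [if_neg (by omega)] at hexp
    have hTcard : T.card ≤ 2 ^ (M+3) - (M+5) := by
      rw [← hScard]
      exact card_le_card hTS
    have hpow : M + 5 ≤ 2 ^ (M + 3) := by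
      have := pow_aux (M + 3) (by omega)
      omega
    have h1 : (M : ℕ) + 4 - 1 = M + 3 := by omega
    rw [h1] at hexp
    refine le_trans (le_min (by omega) (by omega)) hexp

lemma d4case :
    ∃ E : Finset ((Fin 3 → Bool) × (Fin 3 → Bool)),
      (∀ p ∈ E, evenVertex p.1 ∧ ¬ evenVertex p.2) ∧
      cubeEdges 3 ⊆ E ∧
      (E \ cubeEdges 3).card = 2 ^ 3 - 4 ∧
      E.card = 4 * 2 ^ 2 + 2 ^ 2 - 4 ∧
      ∀ A' B' : Finset (Fin 3 → Bool),
        (∀ v ∈ A', evenVertex v) → (∀ v ∈ B', ¬ evenVertex v) →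
        A'.Nonempty → B'.Nonempty →
        (E.filter fun p => p.1 ∈ A' ∧ p.2 ∈ B').card ≤
          4 * A'.card + B'.card - 4 := by
  classical
  set E : Finset ((Fin 3 → Bool) × (Fin 3 → Bool)) :=
    Finset.univ.filter (fun p => evenVertex p.1 ∧ ¬ evenVertex p.2) with hEdef
  have hcubesub : cubeEdges 3 ⊆ E := by
    intro p hp
    rw [cubeEdges, mem_filter] at hp
    rw [hEdef, mem_filter]
    exact ⟨hp.1, hp.2.1, hp.2.2.1⟩
  have hEeq : E = (Finset.univ.filter fun v : V 3 => evenVertex v) ×ˢ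
      (Finset.univ.filter fun v : V 3 => ¬ evenVertex v) := by
    ext p
    rw [hEdef, mem_filter, mem_product, mem_filter, mem_filter]
    constructor
    · rintro ⟨h, h1, h2⟩
      exact ⟨⟨mem_univ _, h1⟩, ⟨mem_univ _, h2⟩⟩
    · rintro ⟨⟨-, h1⟩, -, h2⟩
      exact ⟨mem_univ _, h1, h2⟩
  have hEcard : E.card = 16 := by
    rw [hEeq, card_product, evens_card (by omega), odds_card (by omega)]
    norm_num
  have hcubecard : (cubeEdges 3).card = 12 := by
    rw [cubeEdges_card (by omega)]
    norm_num
  refine ⟨E, ?_, hcubesub, ?_, ?_, ?_⟩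
  · intro p hp
    rw [hEdef, mem_filter] at hp
    exact hp.2
  · rw [card_sdiff_of_subset hcubesub, hEcard, hcubecard]
    norm_num
  · rw [hEcard]
    norm_num
  · intro A' B' hA' hB' hA'ne hB'ne
    have hb : B'.card ≤ 4 := by
      have hsub : B' ⊆ Finset.univ.filter fun v : V 3 => ¬ evenVertex v := by
        intro v hv
        rw [mem_filter]
        exact ⟨mem_univ _, hB' v hv⟩
      have := card_le_card hsub
      rw [odds_card (by omega)] at this
      omega
    have hab : (E.filter fun p => p.1 ∈ A' ∧ p.2 ∈ B').card ≤ A'.card * B'.card := by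
      have hsub : (E.filter fun p => p.1 ∈ A' ∧ p.2 ∈ B') ⊆ A' ×ˢ B' := by
        intro p hp
        rw [mem_filter] at hp
        rw [mem_product]
        exact hp.2
      have := card_le_card hsub
      rwa [card_product] at this
    exact arith_small (card_pos.mpr hA'ne) hb hab

end CubeLaman

theorem cube_plus_edges_one_d_laman (d : ℕ) (hd : 4 ≤ d) :
    ∃ E : Finset ((Fin (d - 1) → Bool) × (Fin (d - 1) → Bool)),
      (∀ p ∈ E, evenVertex p.1 ∧ ¬ evenVertex p.2) ∧
      cubeEdges (d - 1) ⊆ E ∧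
      (E \ cubeEdges (d - 1)).card = 2 ^ (d - 1) - d ∧
      E.card = d * 2 ^ (d - 2) + 2 ^ (d - 2) - d ∧
      ∀ A' B' : Finset (Fin (d - 1) → Bool),
        (∀ v ∈ A', evenVertex v) → (∀ v ∈ B', ¬ evenVertex v) →
        A'.Nonempty → B'.Nonempty →
        (E.filter fun p => p.1 ∈ A' ∧ p.2 ∈ B').card ≤
          d * A'.card + B'.card - d := by
  by_cases hd4 : d = 4
  · subst hd4
    exact CubeLaman.d4case
  · obtain ⟨M, rfl⟩ : ∃ M, d = M + 5 := ⟨d - 5, by omega⟩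
    exact CubeLaman.almost M
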